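/- Let x: ℝ≥0 → ℝ be a solution of ẋ = (1/4)·x·(x−1)·(−3·n_p·x + 5·n_p + 4·n_p·a − 4·a) with n_p ∈ (0,1), 0 < x* < 1 where x* = (5·n_p + 4·n_p·a − 4·a)/(3·n_p). If x(0) ∈ (x*, 1] then x(t) → 1 as t → ∞; if x(0) ∈ [0, x*) then x(t) → 0 as t → ∞. -/

import Mathlib

open Filter Set

/-- General 1-D autonomous ODE convergence lemma: if `f > 0` on `(a,b)`,
`f ≤ 0` on `[b,∞)`, `f b = 0` and `x` solves `x' = f x` for `t ≥ 0` with
`x 0 ∈ (a, b]`, then `x t → b`. -/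
lemma ode_tendsto_aux (f : ℝ → ℝ) (hf : Continuous f) (a b : ℝ)
    (hpos : ∀ u ∈ Set.Ioo a b, 0 < f u)
    (hneg : ∀ u, b ≤ u → f u ≤ 0)
    (hfb : f b = 0)
    (x : ℝ → ℝ) (hode : ∀ t : ℝ, 0 ≤ t → HasDerivAt x (f (x t)) t)
    (hx0 : x 0 ∈ Set.Ioc a b) :
    Tendsto x atTop (nhds b) := by
  have hcx : ContinuousOn x (Ici 0) :=
    fun t ht => (hode t ht).continuousAt.continuousWithinAt
  -- sign of f on (a, b]
  have hnn : ∀ u, a < u → u ≤ b → 0 ≤ f u := by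
    intro u h1 h2
    rcases eq_or_lt_of_le h2 with h | h
    · rw [h, hfb]
    · exact (hpos u ⟨h1, h⟩).le
  -- Step A: upper invariance
  have hub : ∀ t, 0 ≤ t → x t ≤ b := by
    by_contra h
    push_neg at h
    obtain ⟨t1, ht1, hxt1⟩ := h
    set S : Set ℝ := Icc 0 t1 ∩ x ⁻¹' (Iic b) with hS
    have hScl : IsClosed S :=
      (hcx.mono (Icc_subset_Ici_self)).preimage_isClosed_of_isClosed isClosed_Icc isClosed_Iic
    have hScomp : IsCompact S := isCompact_Icc.of_isClosed_subset hScl inter_subset_left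
    have h0S : (0:ℝ) ∈ S := ⟨⟨le_refl 0, ht1⟩, hx0.2⟩
    set t0 := sSup S with ht0def
    have ht0S : t0 ∈ S := hScomp.sSup_mem ⟨0, h0S⟩
    have ht0nn : 0 ≤ t0 := ht0S.1.1
    have ht0lt : t0 < t1 := lt_of_le_of_ne ht0S.1.2 (by
      intro h; rw [h] at ht0S; exact absurd ht0S.2 (not_le.2 hxt1))
    have hkey : ∀ t ∈ Ioc t0 t1, b < x t := by
      intro t ht
      by_contra hle
      push_neg at hle
      have htS : t ∈ S := ⟨⟨le_trans ht0nn ht.1.le, ht.2⟩, hle⟩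
      exact absurd (le_csSup hScomp.bddAbove htS) (not_le.2 ht.1)
    have hanti : AntitoneOn x (Icc t0 t1) := by
      apply antitoneOn_of_deriv_nonpos (convex_Icc _ _)
      · exact hcx.mono (Icc_subset_Ici_self.trans (Ici_subset_Ici.2 ht0nn))
      · rw [interior_Icc]
        intro t ht
        exact (hode t (le_trans ht0nn ht.1.le)).differentiableAt.differentiableWithinAt
      · rw [interior_Icc]
        intro t ht
        rw [(hode t (le_trans ht0nn ht.1.le)).deriv]
        exact hneg _ (hkey t ⟨ht.1, ht.2.le⟩).le
    have := hanti (left_mem_Icc.2 ht0lt.le) (right_mem_Icc.2 ht0lt.le) ht0lt.le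
    exact absurd (this.trans ht0S.2) (not_le.2 hxt1)
  -- Step B: lower invariance
  have hlb : ∀ t, 0 ≤ t → a < x t := by
    by_contra h
    push_neg at h
    obtain ⟨t1, ht1, hxt1⟩ := h
    set S : Set ℝ := Icc 0 t1 ∩ x ⁻¹' (Iic a) with hS
    have hScl : IsClosed S :=
      (hcx.mono (Icc_subset_Ici_self)).preimage_isClosed_of_isClosed isClosed_Icc isClosed_Iic
    have hScomp : IsCompact S := isCompact_Icc.of_isClosed_subset hScl inter_subset_left
    have ht1S : t1 ∈ S := ⟨⟨ht1, le_refl _⟩, hxt1⟩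
    set t0 := sInf S with ht0def
    have ht0S : t0 ∈ S := hScomp.sInf_mem ⟨t1, ht1S⟩
    have ht0nn : 0 ≤ t0 := ht0S.1.1
    have ht0pos : 0 < t0 := lt_of_le_of_ne ht0nn (by
      intro h; rw [← h] at ht0S
      exact absurd ht0S.2 (not_le.2 hx0.1))
    have hkey : ∀ t ∈ Ico 0 t0, a < x t := by
      intro t ht
      by_contra hle
      push_neg at hle
      have htS : t ∈ S := ⟨⟨ht.1, ht.2.le.trans ht0S.1.2⟩, hle⟩
      exact absurd (csInf_le hScomp.bddBelow htS) (not_le.2 ht.2)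
    have hmono : MonotoneOn x (Icc 0 t0) := by
      apply monotoneOn_of_deriv_nonneg (convex_Icc _ _)
      · exact hcx.mono Icc_subset_Ici_self
      · rw [interior_Icc]
        intro t ht
        exact (hode t ht.1.le).differentiableAt.differentiableWithinAt
      · rw [interior_Icc]
        intro t ht
        rw [(hode t ht.1.le).deriv]
        exact hnn _ (hkey t ⟨ht.1.le, ht.2⟩) (hub t ht.1.le)
    have := hmono (left_mem_Icc.2 ht0pos.le) (right_mem_Icc.2 ht0pos.le) ht0pos.le
    exact absurd (hx0.1.trans_le this) (not_lt.2 ht0S.2)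
  -- Step C: monotonicity on [0, ∞)
  have hmono : MonotoneOn x (Ici 0) := by
    apply monotoneOn_of_deriv_nonneg (convex_Ici _) hcx
    · rw [interior_Ici]
      intro t ht
      exact (hode t (le_of_lt ht)).differentiableAt.differentiableWithinAt
    · rw [interior_Ici]
      intro t ht
      rw [(hode t ht.le).deriv]
      exact hnn _ (hlb t ht.le) (hub t ht.le)
  -- Step D: convergence to the sup
  set y : ℝ → ℝ := fun t => x (max t 0) with hy
  have hymono : Monotone y := fun s t hst =>
    hmono (le_max_right s 0) (le_max_right t 0) (max_le_max hst le_rfl)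
  have hybdd : BddAbove (Set.range y) := by
    refine ⟨b, ?_⟩
    rintro _ ⟨t, rfl⟩
    exact hub _ (le_max_right t 0)
  have hL : Tendsto y atTop (nhds (⨆ t, y t)) := tendsto_atTop_ciSup hymono hybdd
  set L := ⨆ t, y t with hLdef
  have hxy : x =ᶠ[atTop] y := by
    filter_upwards [eventually_ge_atTop (0:ℝ)] with t ht
    simp [hy, max_eq_left ht]
  have hxL : Tendsto x atTop (nhds L) := hL.congr' hxy.symm
  have hLb : L ≤ b := ciSup_le fun t => hub _ (le_max_right t 0)
  have hxtL : ∀ t, 0 ≤ t → x t ≤ L := by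
    intro t ht
    have := le_ciSup hybdd t
    simpa [hy, max_eq_left ht] using this
  have hx0L : x 0 ≤ L := hxtL 0 le_rfl
  -- Step E: L = b
  rcases eq_or_lt_of_le hLb with heq | hlt
  · rwa [heq] at hxL
  · exfalso
    obtain ⟨u0, hu0, hminu⟩ :=
      isCompact_Icc.exists_isMinOn (nonempty_Icc.2 hx0L) hf.continuousOn
    have hδ : 0 < f u0 := hpos u0 ⟨lt_of_lt_of_le hx0.1 hu0.1, lt_of_le_of_lt hu0.2 hlt⟩
    have hz : MonotoneOn (fun t => x t - f u0 * t) (Ici 0) := by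
      apply monotoneOn_of_deriv_nonneg (convex_Ici _)
      · exact hcx.sub (continuous_const.mul continuous_id).continuousOn
      · rw [interior_Ici]
        intro t ht
        have h1 : HasDerivAt (fun s : ℝ => f u0 * s) (f u0) t := by
          simpa using (hasDerivAt_id t).const_mul (f u0)
        exact ((hode t ht.le).sub h1).differentiableAt.differentiableWithinAt
      · rw [interior_Ici]
        intro t ht
        have h1 : HasDerivAt (fun s : ℝ => f u0 * s) (f u0) t := by
          simpa using (hasDerivAt_id t).const_mul (f u0)
        rw [HasDerivAt.deriv (f := fun t => x t - f u0 * t) ((hode t ht.le).sub h1)]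
        have hxt : x t ∈ Icc (x 0) L :=
          ⟨hmono (le_refl (0:ℝ)) (mem_Ici.2 (le_of_lt ht)) ht.le, hxtL t ht.le⟩
        have h2 : f u0 ≤ f (x t) := hminu hxt
        simpa using sub_nonneg.2 h2
    set T : ℝ := (b - x 0) / f u0 + 1 with hT
    have hTpos : 0 ≤ T := by
      have h1 : 0 ≤ (b - x 0) / f u0 := div_nonneg (by linarith [hx0.2]) hδ.le
      rw [hT]; linarith
    have hmb := hz (self_mem_Ici) (mem_Ici.2 hTpos) hTpos
    simp only [mul_zero, sub_zero] at hmb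
    have hfT : f u0 * T = (b - x 0) + f u0 := by
      rw [hT]; field_simp
    have hxTb := hub T hTpos
    nlinarith [hmb, hfT, hxTb, hδ]

/-- Basin of attraction for the one-dimensional user dynamics. -/
theorem basin_of_attraction (np a : ℝ) (hnp : np ∈ Set.Ioo (0:ℝ) 1)
    (xs : ℝ) (hxs : xs = (5*np + 4*np*a - 4*a)/(3*np))
    (hxs0 : 0 < xs) (hxs1 : xs < 1)
    (x : ℝ → ℝ)
    (hode : ∀ t : ℝ, 0 ≤ t →
      HasDerivAt x ((1/4) * x t * (x t - 1) * (-3*np*(x t) + 5*np + 4*np*a - 4*a)) t) :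
    (x 0 ∈ Set.Ioc xs 1 → Tendsto x atTop (nhds 1))
    ∧ (x 0 ∈ Set.Ico 0 xs → Tendsto x atTop (nhds 0)) := by
  have hnp0 : 0 < np := hnp.1
  have h3np : (3:ℝ) * np ≠ 0 := by positivity
  have hxseq : 3 * np * xs = 5*np + 4*np*a - 4*a := by
    rw [hxs]; field_simp
  set f : ℝ → ℝ := fun u => (3*np/4) * u * (1-u) * (u - xs) with hfdef
  have hfcont : Continuous f := by
    apply Continuous.mul
    apply Continuous.mul
    apply Continuous.mul continuous_const continuous_id
    · exact continuous_const.sub continuous_id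
    · exact continuous_id.sub continuous_const
  have hode' : ∀ t : ℝ, 0 ≤ t → HasDerivAt x (f (x t)) t := by
    intro t ht
    have := hode t ht
    convert this using 1
    simp only [hfdef]
    linear_combination ((1/4) * x t * (x t - 1)) * hxseq
  constructor
  · intro hx0
    apply ode_tendsto_aux f hfcont xs 1 ?_ ?_ ?_ x hode' hx0
    · intro u hu
      have hu0 : 0 < u := hxs0.trans hu.1
      have h1 : 0 < 1 - u := by linarith [hu.2]
      have h2 : 0 < u - xs := by linarith [hu.1]
      have hc : 0 < 3*np/4 := by positivity
      exact mul_pos (mul_pos (mul_pos hc hu0) h1) h2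
    · intro u hu
      have hu0 : 0 < u := by linarith
      have h2 : 0 ≤ u - xs := by linarith
      have hc : 0 < 3*np/4 := by positivity
      have h := mul_nonneg (mul_nonneg (mul_pos hc hu0).le (by linarith : (0:ℝ) ≤ u - 1)) h2
      simp only [hfdef]
      nlinarith [h]
    · norm_num [hfdef]
  · intro hx0
    have key := ode_tendsto_aux (fun u => -f (-u))
      ((hfcont.comp continuous_neg).neg) (-xs) 0
      (fun u hu => by
        have hv1 : 0 < -u := by simpa using hu.2
        have hv2 : -u < xs := by linarith [hu.1]
        have hc : 0 < 3*np/4 := by positivity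
        have hfneg : f (-u) < 0 := by
          have h1 : 0 < 1 - (-u) := by linarith
          have h2 : -u - xs < 0 := by linarith
          simp only [hfdef]
          exact mul_neg_of_pos_of_neg (mul_pos (mul_pos hc hv1) h1) h2
        simpa using hfneg)
      (fun u hu => by
        have hc : 0 < 3*np/4 := by positivity
        have h := mul_nonneg (mul_nonneg (mul_nonneg hc.le hu)
          (by linarith : (0:ℝ) ≤ u + xs)) (by linarith : (0:ℝ) ≤ 1 + u)
        simp only [hfdef]
        nlinarith [h])
      (by norm_num [hfdef])
      (fun t => -x t)
      (fun t ht => by have h := (hode' t ht).neg; simp only [neg_neg]; exact h)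
      ⟨by simpa using hx0.2, by simpa using hx0.1⟩
    have := key.neg
    simpa using this
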